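/- (Proposition 1: monotonicity of the BI-AWGN symmetric capacity.) The BI-AWGN symmetric capacity h(σ²) is strictly decreasing as a function of the noise variance σ² on (0,∞); equivalently, under the Gaussian approximation in which a subchannel with LLR mean m is modeled as a BI-AWGN channel with σ² = 2/m, the symmetric capacity is strictly increasing in the LLR mean m. -/

import Mathlib

/-- The BPSK-modulated BI-AWGN transition density
`W(y|x) = (2πσ²)^{−1/2}·exp(−(y − (1 − 2x))²/(2σ²))`. -/
noncomputable def Wden (σ2 x y : ℝ) : ℝ :=
  (Real.sqrt (2 * Real.pi * σ2))⁻¹ * Real.exp (-(y - (1 - 2 * x)) ^ 2 / (2 * σ2))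

/-- The BI-AWGN symmetric capacity
`h(σ²) = (1/2)·Σ_{x∈{0,1}} ∫_ℝ W(y|x)·log₂(2W(y|x)/(W(y|0)+W(y|1))) dy`. -/
noncomputable def capBIAWGN (σ2 : ℝ) : ℝ :=
  (1 / 2) *
    ((∫ y : ℝ, Wden σ2 0 y *
        Real.logb 2 (2 * Wden σ2 0 y / (Wden σ2 0 y + Wden σ2 1 y))) +
     (∫ y : ℝ, Wden σ2 1 y *
        Real.logb 2 (2 * Wden σ2 1 y / (Wden σ2 0 y + Wden σ2 1 y))))

namespace CapAux

open Real MeasureTheory Filter Set Topology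

/-! ### Basic auxiliary functions -/

/-- `Lf x = log₂(1 + eˣ)`. -/
noncomputable def Lf (x : ℝ) : ℝ := Real.logb 2 (1 + Real.exp x)

/-- standard normal density -/
noncomputable def phi (u : ℝ) : ℝ := (Real.sqrt (2 * Real.pi))⁻¹ * Real.exp (-u ^ 2 / 2)

/-- logistic sigmoid -/
noncomputable def sig (x : ℝ) : ℝ := Real.exp x / (1 + Real.exp x)

/-- argument function -/
noncomputable def Aa (t u : ℝ) : ℝ := -2 / t - 2 / Real.sqrt t * u

/-- the key integral: `capBIAWGN t = 1 - G t` for `t > 0`. -/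
noncomputable def G (t : ℝ) : ℝ := ∫ u : ℝ, phi u * Lf (Aa t u)

/-- the derivative of `G`. -/
noncomputable def Gder (t : ℝ) : ℝ :=
  ∫ u : ℝ, phi u * (sig (Aa t u) / Real.log 2 * (2 / t ^ 2 + u / (t * Real.sqrt t)))

lemma one_add_exp_pos (x : ℝ) : 0 < 1 + Real.exp x := by positivity

lemma one_add_exp_ne (x : ℝ) : 1 + Real.exp x ≠ 0 := (one_add_exp_pos x).ne'

lemma sig_pos (x : ℝ) : 0 < sig x := div_pos (Real.exp_pos x) (one_add_exp_pos x)

lemma sig_lt_one (x : ℝ) : sig x < 1 := by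
  rw [sig, div_lt_one (one_add_exp_pos x)]
  linarith [Real.exp_pos x]

@[fun_prop]
lemma continuous_sig : Continuous sig :=
  Real.continuous_exp.div (continuous_const.add Real.continuous_exp) one_add_exp_ne

lemma Lf_eq_log (x : ℝ) : Lf x = Real.log (1 + Real.exp x) / Real.log 2 := by
  rw [Lf, Real.logb]

@[fun_prop]
lemma continuous_Lf : Continuous Lf := by
  have h : Continuous fun y : ℝ => Real.log (1 + Real.exp y) / Real.log 2 := by
    apply Continuous.div_const
    rw [continuous_iff_continuousAt]
    intro x
    exact ((continuous_const.add Real.continuous_exp).continuousAt).log (one_add_exp_ne x)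
  simpa only [← Lf_eq_log] using h

lemma hasDerivAt_Lf (x : ℝ) : HasDerivAt Lf (sig x / Real.log 2) x := by
  have h1 : HasDerivAt (fun y : ℝ => 1 + Real.exp y) (Real.exp x) x :=
    (Real.hasDerivAt_exp x).const_add 1
  have h2 : HasDerivAt (fun y : ℝ => Real.log (1 + Real.exp y))
      ((1 + Real.exp x)⁻¹ * Real.exp x) x := by
    have := (Real.hasDerivAt_log (one_add_exp_ne x)).comp x h1; exact this
  have h3 := h2.div_const (Real.log 2)
  have hfun : Lf = fun y => Real.log (1 + Real.exp y) / Real.log 2 := funext Lf_eq_log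
  rw [hfun]
  refine h3.congr_deriv ?_
  simp only [sig]
  field_simp

lemma hasDerivAt_sig (x : ℝ) : HasDerivAt sig (sig x * (1 - sig x)) x := by
  have h := (Real.hasDerivAt_exp x).div ((Real.hasDerivAt_exp x).const_add 1) (one_add_exp_ne x)
  have hfun : sig = fun y => Real.exp y / (1 + Real.exp y) := rfl
  rw [hfun]
  refine h.congr_deriv ?_
  have h1 := one_add_exp_ne x
  simp only [sig]
  field_simp

lemma Lf_nonneg (x : ℝ) : 0 ≤ Lf x :=
  Real.logb_nonneg one_lt_two (by linarith [Real.exp_pos x])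

lemma log_two_pos : (0 : ℝ) < Real.log 2 := Real.log_pos one_lt_two

lemma Lf_le (x : ℝ) : Lf x ≤ 1 + |x| / Real.log 2 := by
  have h1 : 1 + Real.exp x ≤ 2 * Real.exp |x| := by
    have hx := Real.exp_le_exp.2 (le_abs_self x)
    have h0 : (1 : ℝ) ≤ Real.exp |x| := Real.one_le_exp (abs_nonneg x)
    nlinarith
  have h2 : Lf x ≤ Real.logb 2 (2 * Real.exp |x|) :=
    Real.logb_le_logb_of_le one_lt_two (one_add_exp_pos x) h1
  refine h2.trans_eq ?_
  rw [Real.logb_mul two_ne_zero (Real.exp_pos _).ne',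
    Real.logb_self_eq_one one_lt_two, Real.logb, Real.log_exp]

/-! ### Integrability facts about the Gaussian weight -/

lemma phi_pos (u : ℝ) : 0 < phi u :=
  mul_pos (inv_pos.2 (Real.sqrt_pos.2 (by positivity))) (Real.exp_pos _)

@[fun_prop]
lemma continuous_phi : Continuous phi := by
  apply continuous_const.mul
  exact Real.continuous_exp.comp (by fun_prop)

lemma phi_eq (u : ℝ) : phi u = (Real.sqrt (2 * Real.pi))⁻¹ * Real.exp (-(1 / 2 : ℝ) * u ^ 2) := by
  simp only [phi]; congr 1; ring_nf

lemma integrable_phi : Integrable phi := by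
  have h : Integrable (fun u : ℝ => Real.exp (-(1 / 2 : ℝ) * u ^ 2)) :=
    integrable_exp_neg_mul_sq (by norm_num)
  have h2 := h.const_mul (Real.sqrt (2 * Real.pi))⁻¹
  exact h2.congr (Eventually.of_forall fun u => (phi_eq u).symm)

lemma integrable_abs_phi : Integrable (fun u : ℝ => |u| * phi u) := by
  have h : Integrable (fun u : ℝ => u * Real.exp (-(1 / 2 : ℝ) * u ^ 2)) :=
    integrable_mul_exp_neg_mul_sq (by norm_num)
  have h2 := (h.abs.const_mul (Real.sqrt (2 * Real.pi))⁻¹)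
  refine h2.congr (Eventually.of_forall fun u => ?_)
  simp only [abs_mul, abs_of_nonneg (Real.exp_pos _).le, phi_eq]
  ring

lemma integrable_phi_mul {g : ℝ → ℝ} (hg : Continuous g) {c1 c2 : ℝ}
    (hb : ∀ u, |g u| ≤ c1 + c2 * |u|) : Integrable (fun u => phi u * g u) := by
  have hbi : Integrable (fun u : ℝ => c1 * phi u + c2 * (|u| * phi u)) :=
    (integrable_phi.const_mul c1).add (integrable_abs_phi.const_mul c2)
  refine hbi.mono' ((continuous_phi.mul hg).aestronglyMeasurable)
    (Eventually.of_forall fun u => ?_)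
  have hp := (phi_pos u).le
  rw [Real.norm_eq_abs, abs_mul, abs_of_nonneg hp]
  calc phi u * |g u| ≤ phi u * (c1 + c2 * |u|) := mul_le_mul_of_nonneg_left (hb u) hp
    _ = c1 * phi u + c2 * (|u| * phi u) := by ring

lemma integral_phi : ∫ u : ℝ, phi u = 1 := by
  have h : ∫ u : ℝ, Real.exp (-(1 / 2 : ℝ) * u ^ 2) = Real.sqrt (Real.pi / (1 / 2)) :=
    integral_gaussian (1 / 2)
  have h2 : ∫ u : ℝ, phi u
      = (Real.sqrt (2 * Real.pi))⁻¹ * ∫ u : ℝ, Real.exp (-(1 / 2 : ℝ) * u ^ 2) := by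
    rw [← integral_const_mul]
    exact integral_congr_ae (Eventually.of_forall fun u => phi_eq u)
  have hπ : Real.pi / (1 / 2 : ℝ) = 2 * Real.pi := by ring
  rw [h2, h, hπ]
  exact inv_mul_cancel₀ (Real.sqrt_ne_zero'.mpr (by positivity))

/-! ### Pointwise identities for `Wden` -/

lemma Wden_pos {t : ℝ} (ht : 0 < t) (x y : ℝ) : 0 < Wden t x y :=
  mul_pos (inv_pos.2 (Real.sqrt_pos.2 (by positivity))) (Real.exp_pos _)

lemma Wden_one_eq {t : ℝ} (ht : 0 < t) (y : ℝ) :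
    Wden t 1 y = Wden t 0 y * Real.exp (-2 * y / t) := by
  rw [Wden, Wden, mul_assoc ((Real.sqrt (2 * Real.pi * t))⁻¹), ← Real.exp_add]
  congr 2
  field_simp
  ring

lemma Wden_zero_eq {t : ℝ} (ht : 0 < t) (y : ℝ) :
    Wden t 0 y = Wden t 1 y * Real.exp (2 * y / t) := by
  rw [Wden_one_eq ht y, mul_assoc (Wden t 0 y), ← Real.exp_add]
  have h : -2 * y / t + 2 * y / t = 0 := by ring
  rw [h, Real.exp_zero, mul_one]

lemma logb_ratio_zero {t : ℝ} (ht : 0 < t) (y : ℝ) :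
    Real.logb 2 (2 * Wden t 0 y / (Wden t 0 y + Wden t 1 y)) = 1 - Lf (-2 * y / t) := by
  have hW := Wden_pos ht 0 y
  have h1 : 2 * Wden t 0 y / (Wden t 0 y + Wden t 1 y) = 2 / (1 + Real.exp (-2 * y / t)) := by
    rw [Wden_one_eq ht y]
    rw [div_eq_div_iff (by positivity) (by positivity)]
    ring
  rw [h1, Real.logb_div two_ne_zero (one_add_exp_ne _),
    Real.logb_self_eq_one one_lt_two, Lf]

lemma logb_ratio_one {t : ℝ} (ht : 0 < t) (y : ℝ) :
    Real.logb 2 (2 * Wden t 1 y / (Wden t 0 y + Wden t 1 y)) = 1 - Lf (2 * y / t) := by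
  have hW := Wden_pos ht 1 y
  have h1 : 2 * Wden t 1 y / (Wden t 0 y + Wden t 1 y) = 2 / (1 + Real.exp (2 * y / t)) := by
    rw [Wden_zero_eq ht y]
    rw [div_eq_div_iff (by positivity) (by positivity)]
    ring
  rw [h1, Real.logb_div two_ne_zero (one_add_exp_ne _),
    Real.logb_self_eq_one one_lt_two, Lf]

lemma Wden_zero_neg {t : ℝ} (y : ℝ) : Wden t 0 (-y) = Wden t 1 y := by
  rw [Wden, Wden]; congr 2; ring

lemma Wden_one_neg {t : ℝ} (y : ℝ) : Wden t 1 (-y) = Wden t 0 y := by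
  rw [Wden, Wden]; congr 2; ring

/-! ### Change of variables -/

lemma integral_gauss_sub {t : ℝ} (ht : 0 < t) (f : ℝ → ℝ) :
    (∫ y : ℝ, Wden t 0 y * f y) = ∫ u : ℝ, phi u * f (Real.sqrt t * u + 1) := by
  have hst : Real.sqrt t > 0 := Real.sqrt_pos.2 ht
  have hsq : Real.sqrt t * Real.sqrt t = t := Real.mul_self_sqrt ht.le
  have key : ∀ u : ℝ, phi u * f (Real.sqrt t * u + 1)
      = Real.sqrt t * ((fun x => Wden t 0 (x + 1) * f (x + 1)) (Real.sqrt t * u)) := by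
    intro u
    simp only
    rw [phi, Wden]
    have h1 : Real.sqrt (2 * Real.pi * t) = Real.sqrt (2 * Real.pi) * Real.sqrt t := by
      rw [← Real.sqrt_mul (by positivity)]
    have h2 : -(Real.sqrt t * u + 1 - (1 - 2 * 0)) ^ 2 / (2 * t) = -u ^ 2 / 2 := by
      have h3 : (Real.sqrt t * u + 1 - (1 - 2 * 0)) ^ 2 = t * u ^ 2 := by
        rw [show Real.sqrt t * u + 1 - (1 - 2 * 0) = Real.sqrt t * u by ring, mul_pow,
          Real.sq_sqrt ht.le]
      rw [h3]
      field_simp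
    rw [h1, h2, mul_inv]
    field_simp
  rw [integral_congr_ae (Eventually.of_forall key), integral_const_mul,
    MeasureTheory.Measure.integral_comp_mul_left (fun x => Wden t 0 (x + 1) * f (x + 1))
      (Real.sqrt t)]
  rw [abs_of_nonneg (inv_nonneg.2 hst.le), smul_eq_mul, ← mul_assoc,
    mul_inv_cancel₀ hst.ne', one_mul]
  exact (integral_add_right_eq_self (fun y => Wden t 0 y * f y) 1).symm

/-! ### `capBIAWGN = 1 - G` -/

lemma abs_Lf_le (a b : ℝ) (u : ℝ) :
    |Lf (a + b * u)| ≤ (1 + |a| / Real.log 2) + (|b| / Real.log 2) * |u| := by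
  rw [abs_of_nonneg (Lf_nonneg _)]
  have h1 := Lf_le (a + b * u)
  have h2 : |a + b * u| ≤ |a| + |b| * |u| := (abs_add_le _ _).trans (by rw [abs_mul])
  have h3 : |a + b * u| / Real.log 2 ≤ (|a| + |b| * |u|) / Real.log 2 :=
    div_le_div_of_nonneg_right h2 log_two_pos.le
  calc Lf (a + b * u) ≤ 1 + |a + b * u| / Real.log 2 := h1
    _ ≤ 1 + (|a| + |b| * |u|) / Real.log 2 := by linarith
    _ = (1 + |a| / Real.log 2) + (|b| / Real.log 2) * |u| := by ring

lemma Aa_eq (t u : ℝ) : Aa t u = -2 / t + (-(2 / Real.sqrt t)) * u := by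
  rw [Aa]; ring

lemma integrable_phi_Lf (t : ℝ) : Integrable (fun u => phi u * Lf (Aa t u)) := by
  have hc : Continuous fun u => Lf (Aa t u) := by
    apply continuous_Lf.comp
    unfold Aa
    fun_prop
  apply integrable_phi_mul hc (c1 := 1 + |(-2 : ℝ) / t| / Real.log 2)
    (c2 := |(-(2 / Real.sqrt t))| / Real.log 2)
  intro u
  rw [Aa_eq]
  exact abs_Lf_le _ _ u

lemma cap_eq {t : ℝ} (ht : 0 < t) : capBIAWGN t = 1 - G t := by
  have hst : Real.sqrt t > 0 := Real.sqrt_pos.2 ht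
  have hsq : Real.sqrt t * Real.sqrt t = t := Real.mul_self_sqrt ht.le
  have harg : ∀ u : ℝ, -2 * (Real.sqrt t * u + 1) / t = Aa t u := by
    intro u
    have hrw : 2 / Real.sqrt t * u = 2 * Real.sqrt t * u / t := by
      rw [div_mul_eq_mul_div, div_eq_div_iff hst.ne' ht.ne']
      linear_combination (-(2:ℝ) * u) * hsq
    rw [Aa, hrw]
    ring
  have e0 : (∫ y : ℝ, Wden t 0 y *
        Real.logb 2 (2 * Wden t 0 y / (Wden t 0 y + Wden t 1 y)))
      = ∫ u : ℝ, phi u * (1 - Lf (Aa t u)) := by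
    have h := integral_gauss_sub ht
      (fun y => Real.logb 2 (2 * Wden t 0 y / (Wden t 0 y + Wden t 1 y)))
    rw [h]
    refine integral_congr_ae (Eventually.of_forall fun u => ?_)
    simp only
    rw [logb_ratio_zero ht, harg u]
  have e1 : (∫ y : ℝ, Wden t 1 y *
        Real.logb 2 (2 * Wden t 1 y / (Wden t 0 y + Wden t 1 y)))
      = ∫ u : ℝ, phi u * (1 - Lf (Aa t u)) := by
    have hsym : (∫ y : ℝ, Wden t 1 y *
          Real.logb 2 (2 * Wden t 1 y / (Wden t 0 y + Wden t 1 y)))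
        = ∫ y : ℝ, Wden t 0 y *
          Real.logb 2 (2 * Wden t 0 y / (Wden t 0 y + Wden t 1 y)) := by
      rw [← integral_neg_eq_self (fun y : ℝ => Wden t 1 y *
        Real.logb 2 (2 * Wden t 1 y / (Wden t 0 y + Wden t 1 y)))]
      refine integral_congr_ae (Eventually.of_forall fun y => ?_)
      simp only
      rw [Wden_one_neg, Wden_zero_neg, add_comm (Wden t 1 y)]
    rw [hsym, e0]
  have hsplit : (∫ u : ℝ, phi u * (1 - Lf (Aa t u))) = 1 - G t := by
    have h1 : (fun u : ℝ => phi u * (1 - Lf (Aa t u)))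
        = fun u => phi u - phi u * Lf (Aa t u) := by
      funext u; ring
    rw [h1, integral_sub integrable_phi (integrable_phi_Lf t), integral_phi, G]
  rw [capBIAWGN, e0, e1, hsplit]
  ring

/-! ### Differentiation under the integral sign -/

lemma hasDerivAt_Aa {t : ℝ} (ht : 0 < t) (u : ℝ) :
    HasDerivAt (fun s => Aa s u) (2 / t ^ 2 + u / (t * Real.sqrt t)) t := by
  have hst : Real.sqrt t > 0 := Real.sqrt_pos.2 ht
  have hsq : Real.sqrt t ^ 2 = t := Real.sq_sqrt ht.le
  have h1 : HasDerivAt (fun s : ℝ => s⁻¹) (-((t : ℝ) ^ 2)⁻¹) t := hasDerivAt_inv ht.ne'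
  have h2 : HasDerivAt (fun s : ℝ => Real.sqrt s) (1 / (2 * Real.sqrt t)) t :=
    Real.hasDerivAt_sqrt ht.ne'
  have h3 : HasDerivAt (fun s : ℝ => (Real.sqrt s)⁻¹)
      (-(1 / (2 * Real.sqrt t)) / Real.sqrt t ^ 2) t := h2.inv hst.ne'
  have h4 : HasDerivAt (fun s : ℝ => -2 * s⁻¹ + -2 * u * (Real.sqrt s)⁻¹)
      (-2 * -((t : ℝ) ^ 2)⁻¹ + -2 * u * (-(1 / (2 * Real.sqrt t)) / Real.sqrt t ^ 2)) t :=
    (h1.const_mul (-2)).add (h3.const_mul (-2 * u))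
  have hfun : (fun s : ℝ => Aa s u) = fun s : ℝ => -2 * s⁻¹ + -2 * u * (Real.sqrt s)⁻¹ := by
    funext s
    rw [Aa]
    ring
  rw [hfun]
  convert h4 using 1
  rw [hsq]
  field_simp

lemma hasDerivAt_integrand {t : ℝ} (ht : 0 < t) (u : ℝ) :
    HasDerivAt (fun s => phi u * Lf (Aa s u))
      (phi u * (sig (Aa t u) / Real.log 2 * (2 / t ^ 2 + u / (t * Real.sqrt t)))) t := by
  have h := ((hasDerivAt_Lf (Aa t u)).comp t (hasDerivAt_Aa ht u)).const_mul (phi u)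
  exact h

lemma tsqrt_mono {a b : ℝ} (ha : 0 < a) (hab : a ≤ b) :
    a * Real.sqrt a ≤ b * Real.sqrt b :=
  mul_le_mul hab (Real.sqrt_le_sqrt hab) (Real.sqrt_nonneg a) (by linarith)

lemma hasDerivAt_G {t : ℝ} (ht : 0 < t) : HasDerivAt G (Gder t) t := by
  set ε := t / 2 with hε_def
  have hε : 0 < ε := by positivity
  have hεsq : 0 < ε * Real.sqrt ε := by positivity
  set bound : ℝ → ℝ :=
    fun u => phi u * ((2 / ε ^ 2 + |u| / (ε * Real.sqrt ε)) / Real.log 2) with hbound_def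
  have hmain := hasDerivAt_integral_of_dominated_loc_of_deriv_le (μ := volume)
    (F := fun s u => phi u * Lf (Aa s u))
    (F' := fun s u => phi u * (sig (Aa s u) / Real.log 2 * (2 / s ^ 2 + u / (s * Real.sqrt s))))
    (x₀ := t) (bound := bound) (Metric.ball_mem_nhds t hε) ?_ ?_ ?_ ?_ ?_ ?_
  · exact hmain.2
  · refine Eventually.of_forall fun s => ?_
    have hc : Continuous fun u => phi u * Lf (Aa s u) := by
      apply continuous_phi.mul
      apply continuous_Lf.comp
      unfold Aa
      fun_prop
    exact hc.aestronglyMeasurable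
  · exact integrable_phi_Lf t
  · have hc : Continuous fun u =>
        phi u * (sig (Aa t u) / Real.log 2 * (2 / t ^ 2 + u / (t * Real.sqrt t))) := by
      apply continuous_phi.mul
      apply Continuous.mul
      · exact (continuous_sig.comp (by unfold Aa; fun_prop)).div_const _
      · fun_prop
    exact hc.aestronglyMeasurable
  · refine Eventually.of_forall fun u => fun s hs => ?_
    have hsε : ε < s := by
      have := abs_lt.1 (mem_ball_iff_norm.1 hs)
      simp only [hε_def] at *
      linarith [this.1]
    have hs0 : 0 < s := hε.trans hsε
    have hsig0 := sig_pos (Aa s u)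
    have hsig1 := sig_lt_one (Aa s u)
    have hterm : |2 / s ^ 2 + u / (s * Real.sqrt s)|
        ≤ 2 / ε ^ 2 + |u| / (ε * Real.sqrt ε) := by
      have ha : |2 / s ^ 2 + u / (s * Real.sqrt s)|
          ≤ 2 / s ^ 2 + |u| / (s * Real.sqrt s) := by
        refine (abs_add_le _ _).trans ?_
        rw [abs_of_nonneg (by positivity), abs_div,
          abs_of_nonneg (by positivity : (0:ℝ) ≤ s * Real.sqrt s)]
      refine ha.trans ?_
      have h1 : 2 / s ^ 2 ≤ 2 / ε ^ 2 := by
        apply div_le_div_of_nonneg_left (by norm_num) (by positivity)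
        exact pow_le_pow_left₀ hε.le hsε.le 2
      have h2 : |u| / (s * Real.sqrt s) ≤ |u| / (ε * Real.sqrt ε) := by
        apply div_le_div_of_nonneg_left (abs_nonneg u) hεsq
        exact tsqrt_mono hε hsε.le
      linarith
    rw [Real.norm_eq_abs, abs_mul, abs_of_nonneg (phi_pos u).le, hbound_def]
    apply mul_le_mul_of_nonneg_left _ (phi_pos u).le
    rw [abs_mul, abs_div, abs_of_nonneg (sig_pos _).le,
      abs_of_nonneg log_two_pos.le, div_mul_eq_mul_div, div_le_div_iff₀ log_two_pos log_two_pos]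
    have hb1 : sig (Aa s u) * |2 / s ^ 2 + u / (s * Real.sqrt s)|
        ≤ 1 * (2 / ε ^ 2 + |u| / (ε * Real.sqrt ε)) := by
      apply mul_le_mul hsig1.le hterm (abs_nonneg _) zero_le_one
    nlinarith [log_two_pos]
  · refine integrable_phi_mul (c1 := (2 / ε ^ 2) / Real.log 2)
      (c2 := (1 / (ε * Real.sqrt ε)) / Real.log 2) ?_ ?_
    · exact ((continuous_const.add (continuous_abs.div_const _)).div_const _)
    · intro u
      rw [abs_of_nonneg (by positivity), add_div]
      apply le_of_eq
      ring
  · refine Eventually.of_forall fun u => fun s hs => ?_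
    have hsε : ε < s := by
      have := abs_lt.1 (mem_ball_iff_norm.1 hs)
      simp only [hε_def] at *
      linarith [this.1]
    exact hasDerivAt_integrand (hε.trans hsε) u

/-! ### Gaussian integration by parts -/

lemma hasDerivAt_phi (u : ℝ) : HasDerivAt phi (-u * phi u) u := by
  have h1 : HasDerivAt (fun v : ℝ => -v ^ 2 / 2) (-u) u := by
    have := ((hasDerivAt_pow 2 u).neg).div_const 2
    refine this.congr_deriv ?_
    simp
    ring
  have h2 := (Real.hasDerivAt_exp (-u ^ 2 / 2)).comp u h1
  have h3 := h2.const_mul (Real.sqrt (2 * Real.pi))⁻¹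
  have hfun : phi = fun v => (Real.sqrt (2 * Real.pi))⁻¹ * Real.exp (-v ^ 2 / 2) := rfl
  rw [hfun]
  refine h3.congr_deriv ?_
  simp only [phi]
  ring

lemma phi_tendsto_atTop : Tendsto phi atTop (𝓝 0) := by
  have h1 : Tendsto (fun u : ℝ => -u ^ 2 / 2) atTop atBot := by
    apply Tendsto.atBot_div_const (by norm_num : (0:ℝ) < 2)
    exact tendsto_neg_atTop_atBot.comp (tendsto_pow_atTop two_ne_zero)
  have h2 : Tendsto (fun u : ℝ => Real.exp (-u ^ 2 / 2)) atTop (𝓝 0) :=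
    Real.tendsto_exp_atBot.comp h1
  have h3 := h2.const_mul (Real.sqrt (2 * Real.pi))⁻¹
  rw [mul_zero] at h3
  exact h3

lemma phi_tendsto_atBot : Tendsto phi atBot (𝓝 0) := by
  have h1 : Tendsto (fun u : ℝ => -u ^ 2 / 2) atBot atBot := by
    apply Tendsto.atBot_div_const (by norm_num : (0:ℝ) < 2)
    have h : Tendsto (fun u : ℝ => u ^ 2) atBot atTop := by
      have heq : (fun u : ℝ => u ^ 2) = fun u : ℝ => |u| ^ 2 := by
        funext u; rw [sq_abs]
      rw [heq]
      exact (tendsto_pow_atTop two_ne_zero).comp tendsto_abs_atBot_atTop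
    exact tendsto_neg_atTop_atBot.comp h
  have h2 : Tendsto (fun u : ℝ => Real.exp (-u ^ 2 / 2)) atBot (𝓝 0) :=
    Real.tendsto_exp_atBot.comp h1
  have h3 := h2.const_mul (Real.sqrt (2 * Real.pi))⁻¹
  rw [mul_zero] at h3
  exact h3

lemma ibp (a b : ℝ) :
    (∫ u : ℝ, phi u * (u * sig (a + b * u)))
      = b * ∫ u : ℝ, phi u * (sig (a + b * u) * (1 - sig (a + b * u))) := by
  set H : ℝ → ℝ := fun u => phi u * sig (a + b * u) with hH_def
  set H' : ℝ → ℝ := fun u =>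
    -u * phi u * sig (a + b * u) + phi u * (sig (a + b * u) * (1 - sig (a + b * u)) * b)
    with hH'_def
  have hderiv : ∀ u : ℝ, HasDerivAt H (H' u) u := by
    intro u
    have h1 : HasDerivAt (fun v : ℝ => a + b * v) b u := by
      simpa using ((hasDerivAt_id u).const_mul b).const_add a
    have h2 : HasDerivAt (fun v : ℝ => sig (a + b * v))
        (sig (a + b * u) * (1 - sig (a + b * u)) * b) u :=
      by have := (hasDerivAt_sig (a + b * u)).comp u h1; exact this
    exact (hasDerivAt_phi u).mul h2
  have hcontH' : Continuous H' := by
    have hc : Continuous fun u : ℝ => sig (a + b * u) :=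
      continuous_sig.comp (by fun_prop)
    rw [hH'_def]
    fun_prop
  have hintH' : Integrable H' := by
    have heq : ∀ u : ℝ, H' u = phi u * (-u * sig (a + b * u)
        + sig (a + b * u) * (1 - sig (a + b * u)) * b) := by
      intro u; rw [hH'_def]; ring
    rw [funext heq]
    apply integrable_phi_mul (c1 := |b|) (c2 := 1)
    · have hc : Continuous fun u : ℝ => sig (a + b * u) :=
        continuous_sig.comp (by fun_prop)
      fun_prop
    · intro u
      have hs0 := sig_pos (a + b * u)
      have hs1 := sig_lt_one (a + b * u)
      have h1 : |(-u) * sig (a + b * u)| ≤ |u| := by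
        rw [abs_mul, abs_neg, abs_of_nonneg hs0.le]
        nlinarith [abs_nonneg u]
      have h2 : |sig (a + b * u) * (1 - sig (a + b * u)) * b| ≤ |b| := by
        rw [abs_mul, abs_mul, abs_of_nonneg hs0.le, abs_of_nonneg (by linarith : (0:ℝ) ≤ 1 - sig (a + b * u))]
        nlinarith [abs_nonneg b, sq_nonneg (1 - 2 * sig (a + b * u))]
      calc |(-u * sig (a + b * u) + sig (a + b * u) * (1 - sig (a + b * u)) * b)|
          ≤ |(-u) * sig (a + b * u)| + |sig (a + b * u) * (1 - sig (a + b * u)) * b| := by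
            rw [neg_mul]; exact abs_add_le _ _
        _ ≤ |u| + |b| := add_le_add h1 h2
        _ = |b| + 1 * |u| := by ring
  have hlimtop : Tendsto H atTop (𝓝 0) := by
    apply squeeze_zero_norm (fun u => ?_) phi_tendsto_atTop
    rw [hH_def, Real.norm_eq_abs, abs_mul, abs_of_nonneg (phi_pos u).le,
      abs_of_nonneg (sig_pos _).le]
    nlinarith [phi_pos u, sig_pos (a + b * u), sig_lt_one (a + b * u)]
  have hlimbot : Tendsto H atBot (𝓝 0) := by
    apply squeeze_zero_norm (fun u => ?_) phi_tendsto_atBot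
    rw [hH_def, Real.norm_eq_abs, abs_mul, abs_of_nonneg (phi_pos u).le,
      abs_of_nonneg (sig_pos _).le]
    nlinarith [phi_pos u, sig_pos (a + b * u), sig_lt_one (a + b * u)]
  have hinterval : ∀ R : ℝ, (∫ u in (-R)..R, H' u) = H R - H (-R) := by
    intro R
    apply intervalIntegral.integral_eq_sub_of_hasDerivAt (fun x _ => hderiv x)
    exact hcontH'.intervalIntegrable _ _
  have hlim1 : Tendsto (fun R : ℝ => ∫ u in (-R)..R, H' u) atTop (𝓝 (∫ u : ℝ, H' u)) :=
    intervalIntegral_tendsto_integral hintH' tendsto_neg_atTop_atBot tendsto_id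
  have hlim2 : Tendsto (fun R : ℝ => ∫ u in (-R)..R, H' u) atTop (𝓝 0) := by
    have : Tendsto (fun R : ℝ => H R - H (-R)) atTop (𝓝 (0 - 0)) :=
      hlimtop.sub (hlimbot.comp tendsto_neg_atTop_atBot)
    rw [sub_zero] at this
    exact this.congr fun R => (hinterval R).symm
  have hzero : (∫ u : ℝ, H' u) = 0 := tendsto_nhds_unique hlim1 hlim2
  -- now split the integral
  have hcsig : Continuous fun u : ℝ => sig (a + b * u) := continuous_sig.comp (by fun_prop)
  have hP : Integrable (fun u : ℝ => phi u * (u * sig (a + b * u))) := by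
    apply integrable_phi_mul (c1 := 0) (c2 := 1)
    · fun_prop
    · intro u
      have hs0 := sig_pos (a + b * u)
      have hs1 := sig_lt_one (a + b * u)
      rw [abs_mul, abs_of_nonneg hs0.le]
      nlinarith [abs_nonneg u]
  have hQ : Integrable (fun u : ℝ => phi u * (sig (a + b * u) * (1 - sig (a + b * u)))) := by
    apply integrable_phi_mul (c1 := 1) (c2 := 0)
    · fun_prop
    · intro u
      have hs0 := sig_pos (a + b * u)
      have hs1 := sig_lt_one (a + b * u)
      rw [abs_mul, abs_of_nonneg hs0.le, abs_of_nonneg (by linarith : (0:ℝ) ≤ 1 - sig (a + b * u))]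
      nlinarith
  have hsplit : (∫ u : ℝ, H' u)
      = -(∫ u : ℝ, phi u * (u * sig (a + b * u)))
        + b * ∫ u : ℝ, phi u * (sig (a + b * u) * (1 - sig (a + b * u))) := by
    have hPn : Integrable (fun u : ℝ => -(phi u * (u * sig (a + b * u)))) := hP.neg
    have hQb : Integrable
        (fun u : ℝ => b * (phi u * (sig (a + b * u) * (1 - sig (a + b * u))))) :=
      hQ.const_mul b
    have heq : (∫ u : ℝ, H' u) = ∫ u : ℝ, (-(phi u * (u * sig (a + b * u)))
        + b * (phi u * (sig (a + b * u) * (1 - sig (a + b * u))))) := by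
      refine integral_congr_ae (Eventually.of_forall fun u => ?_)
      rw [hH'_def]; ring
    rw [heq, integral_add hPn hQb, integral_neg, integral_const_mul]
  rw [hsplit] at hzero
  linarith

/-! ### Closed form of `Gder` and positivity -/

lemma integrable_phi_sig (a b : ℝ) : Integrable (fun u : ℝ => phi u * sig (a + b * u)) := by
  apply integrable_phi_mul (c1 := 1) (c2 := 0)
  · exact continuous_sig.comp (by fun_prop)
  · intro u
    rw [abs_of_nonneg (sig_pos _).le]
    nlinarith [sig_lt_one (a + b * u)]

lemma integrable_phi_sig_sq (a b : ℝ) :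
    Integrable (fun u : ℝ => phi u * sig (a + b * u) ^ 2) := by
  apply integrable_phi_mul (c1 := 1) (c2 := 0)
  · exact (continuous_sig.comp (by fun_prop)).pow 2
  · intro u
    have hs0 := sig_pos (a + b * u)
    have hs1 := sig_lt_one (a + b * u)
    rw [abs_of_nonneg (by positivity)]
    nlinarith

lemma Gder_eq {t : ℝ} (ht : 0 < t) :
    Gder t = 2 / (t ^ 2 * Real.log 2) * ∫ u : ℝ, phi u * sig (Aa t u) ^ 2 := by
  have hst : Real.sqrt t > 0 := Real.sqrt_pos.2 ht
  have hsq : Real.sqrt t * Real.sqrt t = t := Real.mul_self_sqrt ht.le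
  set a : ℝ := -2 / t with ha_def
  set b : ℝ := -(2 / Real.sqrt t) with hb_def
  have hAa : ∀ u : ℝ, Aa t u = a + b * u := fun u => Aa_eq t u
  have hP : Integrable (fun u : ℝ => phi u * (u * sig (a + b * u))) := by
    apply integrable_phi_mul (c1 := 0) (c2 := 1)
    · have : Continuous fun u : ℝ => sig (a + b * u) := continuous_sig.comp (by fun_prop)
      fun_prop
    · intro u
      have hs0 := sig_pos (a + b * u)
      have hs1 := sig_lt_one (a + b * u)
      rw [abs_mul, abs_of_nonneg hs0.le]
      nlinarith [abs_nonneg u]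
  have hs : Integrable (fun u : ℝ => phi u * sig (a + b * u)) := integrable_phi_sig a b
  have step1 : Gder t = (2 / t ^ 2) * (∫ u : ℝ, phi u * sig (a + b * u)) / Real.log 2
      + (1 / (t * Real.sqrt t)) * (∫ u : ℝ, phi u * (u * sig (a + b * u))) / Real.log 2 := by
    rw [Gder]
    have heq : (fun u : ℝ => phi u *
        (sig (Aa t u) / Real.log 2 * (2 / t ^ 2 + u / (t * Real.sqrt t))))
        = fun u : ℝ => (2 / t ^ 2) / Real.log 2 * (phi u * sig (a + b * u))
          + (1 / (t * Real.sqrt t)) / Real.log 2 * (phi u * (u * sig (a + b * u))) := by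
      funext u
      rw [hAa u]
      field_simp
    rw [heq, integral_add ((hs.const_mul _)) ((hP.const_mul _)), integral_const_mul,
      integral_const_mul]
    ring
  have hibp := ibp a b
  have hsig_split : (∫ u : ℝ, phi u * sig (a + b * u))
      - (∫ u : ℝ, phi u * (sig (a + b * u) * (1 - sig (a + b * u))))
      = ∫ u : ℝ, phi u * sig (a + b * u) ^ 2 := by
    rw [← integral_sub hs]
    · refine integral_congr_ae (Eventually.of_forall fun u => ?_)
      ring
    · apply integrable_phi_mul (c1 := 1) (c2 := 0)
      · have : Continuous fun u : ℝ => sig (a + b * u) := continuous_sig.comp (by fun_prop)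
        fun_prop
      · intro u
        have hs0 := sig_pos (a + b * u)
        have hs1 := sig_lt_one (a + b * u)
        rw [abs_mul, abs_of_nonneg hs0.le,
          abs_of_nonneg (by linarith : (0:ℝ) ≤ 1 - sig (a + b * u))]
        nlinarith
  have hbval : (1 / (t * Real.sqrt t)) * b = -(2 / t ^ 2) := by
    rw [hb_def]
    field_simp
    nlinarith [hsq]
  have hAa_sq : (∫ u : ℝ, phi u * sig (Aa t u) ^ 2)
      = ∫ u : ℝ, phi u * sig (a + b * u) ^ 2 := by
    refine integral_congr_ae (Eventually.of_forall fun u => ?_)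
    simp only [hAa]
  have hstep : (1 / (t * Real.sqrt t))
        * (b * ∫ u : ℝ, phi u * (sig (a + b * u) * (1 - sig (a + b * u))))
      = -(2 / t ^ 2) * ∫ u : ℝ, phi u * (sig (a + b * u) * (1 - sig (a + b * u))) := by
    rw [← mul_assoc, hbval]
  rw [step1, hibp, hAa_sq, hstep, ← hsig_split]
  ring

lemma Gder_pos {t : ℝ} (ht : 0 < t) : 0 < Gder t := by
  rw [Gder_eq ht]
  have hint : 0 < ∫ u : ℝ, phi u * sig (Aa t u) ^ 2 := by
    have hinteg : Integrable (fun u : ℝ => phi u * sig (Aa t u) ^ 2) := by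
      have h := integrable_phi_sig_sq (-2 / t) (-(2 / Real.sqrt t))
      refine h.congr (Eventually.of_forall fun u => ?_)
      simp only [← Aa_eq]
    rw [integral_pos_iff_support_of_nonneg
      (fun u => le_of_lt (mul_pos (phi_pos u) (pow_pos (sig_pos _) 2))) hinteg]
    have hsupp : Function.support (fun u : ℝ => phi u * sig (Aa t u) ^ 2) = Set.univ := by
      ext u
      simp only [Function.mem_support, Set.mem_univ, iff_true]
      exact (mul_pos (phi_pos u) (pow_pos (sig_pos _) 2)).ne'
    rw [hsupp]
    simp [Real.volume_univ]
  have hc : 0 < 2 / (t ^ 2 * Real.log 2) := by positivity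
  exact mul_pos hc hint

/-! ### Monotonicity -/

lemma G_strictMono : StrictMonoOn G (Set.Ioi 0) := by
  apply strictMonoOn_of_deriv_pos (convex_Ioi 0)
  · intro x hx
    exact (hasDerivAt_G hx).continuousAt.continuousWithinAt
  · intro x hx
    rw [interior_Ioi] at hx
    rw [(hasDerivAt_G hx).deriv]
    exact Gder_pos hx

end CapAux

/-- Proposition 1: monotonicity of the BI-AWGN symmetric capacity.
`h(σ²)` is strictly decreasing in the noise variance `σ²` on `(0,∞)`; equivalently,
under the Gaussian approximation with `σ² = 2/m`, the symmetric capacity is strictly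
increasing in the LLR mean `m`. -/
theorem capBIAWGN_strictAnti :
    StrictAntiOn capBIAWGN (Set.Ioi 0) ∧
    StrictMonoOn (fun m : ℝ => capBIAWGN (2 / m)) (Set.Ioi 0) := by
  have hanti : StrictAntiOn capBIAWGN (Set.Ioi 0) := by
    intro x hx y hy hxy
    rw [CapAux.cap_eq hx, CapAux.cap_eq hy]
    have := CapAux.G_strictMono hx hy hxy
    linarith
  refine ⟨hanti, ?_⟩
  intro m1 h1 m2 h2 h12
  have hm1 : (0 : ℝ) < m1 := h1
  have hm2 : (0 : ℝ) < m2 := h2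
  have ha : (2 : ℝ) / m2 ∈ Set.Ioi (0 : ℝ) := by
    simp only [Set.mem_Ioi]; positivity
  have hb : (2 : ℝ) / m1 ∈ Set.Ioi (0 : ℝ) := by
    simp only [Set.mem_Ioi]; positivity
  have hlt : 2 / m2 < 2 / m1 := by
    apply div_lt_div_of_pos_left (by norm_num) hm1 h12
  exact hanti ha hb hlt
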